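/- Let γ ≥ 0 with 2γ < N, and let x ∈ D. If ∑_{i=1}^N log(1 + σ_0^{-2} σ_{g,i−1}²(x)) ≤ 2γ, then the posterior variance after all N source observations satisfies σ_{g,N}²(x) ≤ 2γ σ_0² / (N − 2γ). -/

import Mathlib

open Matrix

/-- The `n × n` kernel matrix `K_n = [k_g(x_i, x_j)]` built from the first `n`
points of the sequence `xs` (zero-indexed: `xs 0 = x_1`). -/
noncomputable def kerMat {D : Type*} (k_g : D → D → ℝ) (xs : ℕ → D) (n : ℕ) :
    Matrix (Fin n) (Fin n) ℝ :=
  Matrix.of fun i j => k_g (xs i) (xs j)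

/-- The kernel vector `k_n(x) = [k_g(x_i, x)]_{i=1}^n`. -/
noncomputable def kerVec {D : Type*} (k_g : D → D → ℝ) (xs : ℕ → D) (n : ℕ) (y : D) :
    Fin n → ℝ :=
  fun i => k_g (xs i) y

/-- The posterior variance
`σ_n²(x) = k_g(x,x) − k_n(x)ᵀ (K_n + σ² I_n)⁻¹ k_n(x)`;
for `n = 0` this is `k_g(x,x)`. -/
noncomputable def postVar {D : Type*} (k_g : D → D → ℝ) (xs : ℕ → D) (σ0sq : ℝ)
    (n : ℕ) (y : D) : ℝ :=
  k_g y y -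
    kerVec k_g xs n y ⬝ᵥ
      ((kerMat k_g xs n + σ0sq • (1 : Matrix (Fin n) (Fin n) ℝ))⁻¹ *ᵥ kerVec k_g xs n y)

/-- A PSD matrix plus a positive multiple of the identity is positive definite. -/
lemma addSmulOne_posDef {n : ℕ} {A : Matrix (Fin n) (Fin n) ℝ} (hA : A.PosSemidef)
    {c : ℝ} (hc : 0 < c) : (A + c • (1 : Matrix (Fin n) (Fin n) ℝ)).PosDef := by
  refine Matrix.PosDef.posSemidef_add hA ?_
  rw [smul_one_eq_diagonal]
  exact Matrix.PosDef.diagonal fun _ => hc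

/-- Variational upper bound `2 wᵀk − wᵀAw ≤ kᵀA⁻¹k` for positive definite `A`. -/
lemma qf_le {n : ℕ} {A : Matrix (Fin n) (Fin n) ℝ} (hA : A.PosDef) (k w : Fin n → ℝ) :
    2 * (w ⬝ᵥ k) - w ⬝ᵥ (A *ᵥ w) ≤ k ⬝ᵥ (A⁻¹ *ᵥ k) := by
  have hinv : A * A⁻¹ = 1 := Matrix.mul_nonsing_inv _ hA.det_pos.ne'.isUnit
  set v := A⁻¹ *ᵥ k with hv
  have hAv : A *ᵥ v = k := by rw [hv, Matrix.mulVec_mulVec, hinv, Matrix.one_mulVec]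
  have h0 : 0 ≤ (w - v) ⬝ᵥ (A *ᵥ (w - v)) := by simpa using hA.posSemidef.dotProduct_mulVec_nonneg (w - v)
  have hT : Aᵀ = A := (Matrix.conjTranspose_eq_transpose_of_trivial A).symm.trans hA.isHermitian
  have hsymA : ∀ a b : Fin n → ℝ, a ⬝ᵥ (A *ᵥ b) = b ⬝ᵥ (A *ᵥ a) := fun a b => by
    rw [Matrix.dotProduct_mulVec, ← Matrix.mulVec_transpose, hT, dotProduct_comm]
  have hexp : (w - v) ⬝ᵥ (A *ᵥ (w - v))
      = w ⬝ᵥ (A *ᵥ w) - 2 * (w ⬝ᵥ k) + k ⬝ᵥ (A⁻¹ *ᵥ k) := by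
    have h1 : A *ᵥ (w - v) = A *ᵥ w - k := by rw [Matrix.mulVec_sub, hAv]
    rw [h1, sub_dotProduct, dotProduct_sub, dotProduct_sub]
    have h2 : v ⬝ᵥ (A *ᵥ w) = w ⬝ᵥ k := by rw [hsymA, hAv, dotProduct_comm]
    have h3 : v ⬝ᵥ k = k ⬝ᵥ (A⁻¹ *ᵥ k) := by rw [hv, dotProduct_comm]
    have h4 : w ⬝ᵥ k = k ⬝ᵥ w := dotProduct_comm _ _
    rw [h2, h3]; ring
  linarith [hexp ▸ h0]

/-- A sum over `Fin n` of terms vanishing above `m ≤ n` is a sum over `Fin m`. -/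
lemma sum_dite_lt {n m : ℕ} (h : m ≤ n) (F : ∀ a : ℕ, a < m → ℝ) :
    ∑ i : Fin n, (if h' : (i : ℕ) < m then F i h' else 0)
      = ∑ j : Fin m, F j j.isLt := by
  have hR : ∑ j : Fin m, F j j.isLt
      = ∑ j : Fin m, (if h' : (j : ℕ) < m then F j h' else 0) :=
    Finset.sum_congr rfl fun j _ => (dif_pos j.isLt).symm
  rw [hR, Fin.sum_univ_eq_sum_range (fun a => if h' : a < m then F a h' else 0) n,
    Fin.sum_univ_eq_sum_range (fun a => if h' : a < m then F a h' else 0) m]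
  refine (Finset.sum_subset (Finset.range_subset_range.2 h) ?_).symm
  intro a _ ha
  rw [Finset.mem_range] at ha
  simp [ha]

/-- The posterior variance is nonincreasing in the number of observations. -/
lemma postVar_anti {D : Type*} (k_g : D → D → ℝ)
    (hpsd : ∀ (n : ℕ) (z : Fin n → D),
      (Matrix.of fun i j => k_g (z i) (z j)).PosSemidef)
    {σ0sq : ℝ} (hσ0sq : 0 < σ0sq) (x0 : ℕ → D) {m n : ℕ} (hmn : m ≤ n) (x : D) :
    postVar k_g x0 σ0sq n x ≤ postVar k_g x0 σ0sq m x := by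
  have hKm : (kerMat k_g x0 m).PosSemidef := hpsd m fun i => x0 i
  have hKn : (kerMat k_g x0 n).PosSemidef := hpsd n fun i => x0 i
  set Am := kerMat k_g x0 m + σ0sq • (1 : Matrix (Fin m) (Fin m) ℝ) with hAm
  set An := kerMat k_g x0 n + σ0sq • (1 : Matrix (Fin n) (Fin n) ℝ) with hAn
  have hAmP : Am.PosDef := addSmulOne_posDef hKm hσ0sq
  have hAnP : An.PosDef := addSmulOne_posDef hKn hσ0sq
  set vm := kerVec k_g x0 m x with hvm
  set vn := kerVec k_g x0 n x with hvn
  set wm := Am⁻¹ *ᵥ vm with hwm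
  have hAwm : Am *ᵥ wm = vm := by
    rw [hwm, Matrix.mulVec_mulVec, Matrix.mul_nonsing_inv _ hAmP.det_pos.ne'.isUnit,
      Matrix.one_mulVec]
  set w : Fin n → ℝ := fun i => if h : (i : ℕ) < m then wm ⟨i, h⟩ else 0 with hw
  have key1 : w ⬝ᵥ vn = wm ⬝ᵥ vm := by
    have : w ⬝ᵥ vn = ∑ i : Fin n,
        (if h' : (i : ℕ) < m then wm ⟨i, h'⟩ * k_g (x0 i) x else 0) := by
      refine Finset.sum_congr rfl fun i _ => ?_
      by_cases h : (i : ℕ) < m <;> simp [hw, hvn, kerVec, h]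
    rw [this, sum_dite_lt hmn fun a ha => wm ⟨a, ha⟩ * k_g (x0 a) x]
    rfl
  have key2 : w ⬝ᵥ (An *ᵥ w) = wm ⬝ᵥ (Am *ᵥ wm) := by
    have hmulK : ∀ a : ℕ, (∑ j : Fin n, k_g (x0 a) (x0 (j : ℕ)) * w j)
        = ∑ j : Fin m, k_g (x0 a) (x0 (j : ℕ)) * wm j := by
      intro a
      have : (∑ j : Fin n, k_g (x0 a) (x0 (j : ℕ)) * w j) = ∑ j : Fin n,
          (if h' : (j : ℕ) < m then k_g (x0 a) (x0 (j : ℕ)) * wm ⟨j, h'⟩ else 0) := by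
        refine Finset.sum_congr rfl fun j _ => ?_
        by_cases h : (j : ℕ) < m <;> simp [hw, h]
      rw [this, sum_dite_lt hmn fun b hb => k_g (x0 a) (x0 b) * wm ⟨b, hb⟩]
    have hsplit : w ⬝ᵥ (An *ᵥ w)
        = w ⬝ᵥ (kerMat k_g x0 n *ᵥ w) + σ0sq * (w ⬝ᵥ w) := by
      rw [hAn, Matrix.add_mulVec, dotProduct_add, Matrix.smul_mulVec,
        Matrix.one_mulVec, dotProduct_smul, smul_eq_mul]
    have hsplitm : wm ⬝ᵥ (Am *ᵥ wm)
        = wm ⬝ᵥ (kerMat k_g x0 m *ᵥ wm) + σ0sq * (wm ⬝ᵥ wm) := by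
      rw [hAm, Matrix.add_mulVec, dotProduct_add, Matrix.smul_mulVec,
        Matrix.one_mulVec, dotProduct_smul, smul_eq_mul]
    have hww : w ⬝ᵥ w = wm ⬝ᵥ wm := by
      have : w ⬝ᵥ w = ∑ i : Fin n,
          (if h' : (i : ℕ) < m then wm ⟨i, h'⟩ * wm ⟨i, h'⟩ else 0) := by
        refine Finset.sum_congr rfl fun i _ => ?_
        by_cases h : (i : ℕ) < m <;> simp [hw, h]
      rw [this, sum_dite_lt hmn fun a ha => wm ⟨a, ha⟩ * wm ⟨a, ha⟩]
      rfl
    have hKw : w ⬝ᵥ (kerMat k_g x0 n *ᵥ w) = wm ⬝ᵥ (kerMat k_g x0 m *ᵥ wm) := by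
      have hlhs : w ⬝ᵥ (kerMat k_g x0 n *ᵥ w) = ∑ i : Fin n,
          (if h' : (i : ℕ) < m then
            wm ⟨i, h'⟩ * ∑ j : Fin m, k_g (x0 (i : ℕ)) (x0 (j : ℕ)) * wm j else 0) := by
        refine Finset.sum_congr rfl fun i _ => ?_
        have hMv : (kerMat k_g x0 n *ᵥ w) i
            = ∑ j : Fin n, k_g (x0 (i : ℕ)) (x0 (j : ℕ)) * w j := by
          simp [kerMat, Matrix.mulVec, dotProduct]
        by_cases h : (i : ℕ) < m
        · rw [dif_pos h]
          simp only [hw]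
          rw [dif_pos h, hMv, hmulK (i : ℕ)]
        · rw [dif_neg h]
          simp only [hw]
          rw [dif_neg h, zero_mul]
      rw [hlhs, sum_dite_lt hmn fun a ha => wm ⟨a, ha⟩ *
        ∑ j : Fin m, k_g (x0 a) (x0 (j : ℕ)) * wm j]
      refine Finset.sum_congr rfl fun i _ => ?_
      have : (kerMat k_g x0 m *ᵥ wm) i
          = ∑ j : Fin m, k_g (x0 (i : ℕ)) (x0 (j : ℕ)) * wm j := by
        simp [kerMat, Matrix.mulVec, dotProduct]
      rw [this]
    rw [hsplit, hsplitm, hww, hKw]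
  have hqm : wm ⬝ᵥ (Am *ᵥ wm) = wm ⬝ᵥ vm := by rw [hAwm]
  have hq : vm ⬝ᵥ (Am⁻¹ *ᵥ vm) = wm ⬝ᵥ vm := by rw [← hwm, dotProduct_comm]
  have hle : 2 * (w ⬝ᵥ vn) - w ⬝ᵥ (An *ᵥ w) ≤ vn ⬝ᵥ (An⁻¹ *ᵥ vn) := qf_le hAnP vn w
  rw [key1, key2, hqm] at hle
  have : vm ⬝ᵥ (Am⁻¹ *ᵥ vm) ≤ vn ⬝ᵥ (An⁻¹ *ᵥ vn) := by rw [hq]; linarith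
  simp only [postVar, ← hvm, ← hvn, ← hAm, ← hAn]
  linarith

/-- The posterior variance is nonnegative. -/
lemma postVar_nonneg {D : Type*} (k_g : D → D → ℝ)
    (hsymm : ∀ a b : D, k_g a b = k_g b a)
    (hpsd : ∀ (n : ℕ) (z : Fin n → D),
      (Matrix.of fun i j => k_g (z i) (z j)).PosSemidef)
    {σ0sq : ℝ} (hσ0sq : 0 < σ0sq) (x0 : ℕ → D) (n : ℕ) (x : D) :
    0 ≤ postVar k_g x0 σ0sq n x := by
  have hKn : (kerMat k_g x0 n).PosSemidef := hpsd n fun i => x0 i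
  set An := kerMat k_g x0 n + σ0sq • (1 : Matrix (Fin n) (Fin n) ℝ) with hAn
  have hAnP : An.PosDef := addSmulOne_posDef hKn hσ0sq
  set vn := kerVec k_g x0 n x with hvn
  set v := An⁻¹ *ᵥ vn with hv
  have hAv : An *ᵥ v = vn := by
    rw [hv, Matrix.mulVec_mulVec, Matrix.mul_nonsing_inv _ hAnP.det_pos.ne'.isUnit,
      Matrix.one_mulVec]
  set z : Fin (n + 1) → D := Fin.snoc (fun i : Fin n => x0 i) x with hz
  set u : Fin (n + 1) → ℝ := Fin.snoc (-v) 1 with hu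
  have h0 : 0 ≤ u ⬝ᵥ ((Matrix.of fun i j => k_g (z i) (z j)) *ᵥ u) := by
    simpa using (hpsd (n + 1) z).dotProduct_mulVec_nonneg u
  have hexp : u ⬝ᵥ ((Matrix.of fun i j => k_g (z i) (z j)) *ᵥ u)
      = (-v) ⬝ᵥ (kerMat k_g x0 n *ᵥ (-v)) + 2 * ((-v) ⬝ᵥ vn) + k_g x x := by
    simp only [dotProduct, Matrix.mulVec, Matrix.of_apply, Fin.sum_univ_castSucc,
      hu, hz, hvn, Fin.snoc_castSucc, Fin.snoc_last, kerMat, kerVec, mul_one, one_mul,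
      mul_add, add_mul, Finset.sum_add_distrib]
    have hc : ∑ j : Fin n, k_g x (x0 (j : ℕ)) * (-v) j
        = ∑ j : Fin n, (-v) j * k_g (x0 (j : ℕ)) x :=
      Finset.sum_congr rfl fun j _ => by rw [hsymm, mul_comm]
    rw [hc]; ring
  rw [hexp] at h0
  have h1 : (-v) ⬝ᵥ (kerMat k_g x0 n *ᵥ (-v)) = v ⬝ᵥ (kerMat k_g x0 n *ᵥ v) := by
    rw [Matrix.mulVec_neg, neg_dotProduct, dotProduct_neg, neg_neg]
  have h2 : (-v) ⬝ᵥ vn = -(v ⬝ᵥ vn) := by rw [neg_dotProduct]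
  rw [h1, h2] at h0
  have hvv : 0 ≤ v ⬝ᵥ v := Finset.sum_nonneg fun i _ => mul_self_nonneg _
  have hKA : v ⬝ᵥ (kerMat k_g x0 n *ᵥ v) ≤ v ⬝ᵥ vn := by
    have : v ⬝ᵥ (An *ᵥ v) = v ⬝ᵥ (kerMat k_g x0 n *ᵥ v) + σ0sq * (v ⬝ᵥ v) := by
      rw [hAn, Matrix.add_mulVec, dotProduct_add, Matrix.smul_mulVec,
        Matrix.one_mulVec, dotProduct_smul, smul_eq_mul]
    rw [hAv] at this
    nlinarith
  have hfin : vn ⬝ᵥ (An⁻¹ *ᵥ vn) = v ⬝ᵥ vn := by rw [← hv, dotProduct_comm]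
  simp only [postVar, ← hvn, ← hAn]
  rw [hfin]
  linarith

/-- `u/(1+u) ≤ log (1+u)` for `u ≥ 0`. -/
lemma div_le_log_one_add {u : ℝ} (hu : 0 ≤ u) : u / (1 + u) ≤ Real.log (1 + u) := by
  have h1 : (0 : ℝ) < 1 + u := by linarith
  have h2 := Real.log_le_sub_one_of_pos (inv_pos.2 h1)
  rw [Real.log_inv] at h2
  have he : u / (1 + u) = 1 - (1 + u)⁻¹ := by field_simp; ring
  rw [he]
  linarith

/-- If the information-gain-type sum `∑_{i=1}^N log(1 + σ_0^{-2} σ_{g,i−1}²(x))`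
is at most `2γ` with `2γ < N`, then
`σ_{g,N}²(x) ≤ 2γ σ_0² / (N − 2γ)`. -/
theorem source_posterior_variance_bound {D : Type*} [Nonempty D]
    (k_g : D → D → ℝ)
    (hsymm : ∀ a b : D, k_g a b = k_g b a)
    (hpsd : ∀ (n : ℕ) (z : Fin n → D),
      (Matrix.of fun i j => k_g (z i) (z j)).PosSemidef)
    (σ0sq : ℝ) (hσ0sq : 0 < σ0sq)
    (x0 : ℕ → D) (N : ℕ)
    (γ : ℝ) (hγ : 0 ≤ γ) (hγN : 2 * γ < N)
    (x : D)
    (hsum : ∑ i : Fin N, Real.log (1 + σ0sq⁻¹ * postVar k_g x0 σ0sq i x) ≤ 2 * γ) :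
    postVar k_g x0 σ0sq N x ≤ 2 * γ * σ0sq / (N - 2 * γ) := by
  set s := postVar k_g x0 σ0sq N x with hs
  have hs0 : 0 ≤ s := postVar_nonneg k_g hsymm hpsd hσ0sq x0 N x
  set u := σ0sq⁻¹ * s with huu
  have hu0 : 0 ≤ u := mul_nonneg (inv_pos.2 hσ0sq).le hs0
  have h1u : (0 : ℝ) < 1 + u := by linarith
  have hterm : ∀ i : Fin N, u / (1 + u)
      ≤ Real.log (1 + σ0sq⁻¹ * postVar k_g x0 σ0sq i x) := by
    intro i
    have hmono : s ≤ postVar k_g x0 σ0sq i x :=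
      postVar_anti k_g hpsd hσ0sq x0 i.isLt.le x
    have hle : 1 + u ≤ 1 + σ0sq⁻¹ * postVar k_g x0 σ0sq i x := by
      have := mul_le_mul_of_nonneg_left hmono (inv_pos.2 hσ0sq).le
      linarith
    exact (div_le_log_one_add hu0).trans ((Real.log_le_log_iff h1u (h1u.trans_le hle)).2 hle)
  have hsumlb : (N : ℝ) * (u / (1 + u))
      ≤ ∑ i : Fin N, Real.log (1 + σ0sq⁻¹ * postVar k_g x0 σ0sq i x) := by
    have : (N : ℝ) * (u / (1 + u)) = ∑ _i : Fin N, u / (1 + u) := by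
      simp [Finset.sum_const, Finset.card_univ, mul_comm]
    rw [this]
    exact Finset.sum_le_sum fun i _ => hterm i
  have hNu : (N : ℝ) * (u / (1 + u)) ≤ 2 * γ := hsumlb.trans hsum
  have hNu2 : (N : ℝ) * u ≤ 2 * γ * (1 + u) := by
    have := mul_le_mul_of_nonneg_right hNu h1u.le
    have hcanc : (N : ℝ) * (u / (1 + u)) * (1 + u) = (N : ℝ) * u := by
      field_simp
    rw [hcanc] at this
    exact this
  have hN2 : (0 : ℝ) < (N : ℝ) - 2 * γ := by linarith
  have hsu : σ0sq * u = s := by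
    rw [huu, ← mul_assoc, mul_inv_cancel₀ hσ0sq.ne', one_mul]
  rw [le_div_iff₀ hN2]
  have hfin : u * ((N : ℝ) - 2 * γ) ≤ 2 * γ := by nlinarith
  nlinarith [mul_le_mul_of_nonneg_left hfin hσ0sq.le]
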